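/- No context-free matrix grammar generates exactly the set of all square pictures over a one-letter alphabet: the language {a^{(n,n)} : n ≥ 1} is not a CF matrix language. Consequently the classes of CF matrix languages and grid-grammar languages are incomparable. -/

import Mathlib

/-- A (nonempty) picture over alphabet `A`. -/
structure Pic (A : Type*) where
  rows : ℕ
  cols : ℕ
  rows_pos : 0 < rows
  cols_pos : 0 < cols
  val : Fin rows → Fin cols → A

/-- A tile: a 2×2 picture over `A ∪ {#}`; `none` plays the role of the border
symbol `#`.  Components: (top-left, top-right, bottom-left, bottom-right). -/
abbrev Tile (A : Type*) := Option A × Option A × Option A × Option A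

/-- Pixel of the bordered picture `p̂`, with 1-based coordinates
`0 ≤ i ≤ rows+1`, `0 ≤ j ≤ cols+1`; the border carries `none` (i.e. `#`). -/
def Pic.bval {A : Type*} (p : Pic A) (i j : ℕ) : Option A :=
  if h : 1 ≤ i ∧ i ≤ p.rows ∧ 1 ≤ j ∧ j ≤ p.cols then
    some (p.val ⟨i - 1, by omega⟩ ⟨j - 1, by omega⟩)
  else none

/-- The set `⟦p̂⟧` of all 2×2 subblocks of the bordered picture `p̂`. -/
def Pic.tiles {A : Type*} (p : Pic A) : Set (Tile A) :=
  {t | ∃ i j, i ≤ p.rows ∧ j ≤ p.cols ∧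
    t = (p.bval i j, p.bval i (j + 1), p.bval (i + 1) j, p.bval (i + 1) (j + 1))}

/-- The local language defined by a tile set `θ`. -/
def LOC {A : Type*} (θ : Set (Tile A)) : Set (Pic A) :=
  {p | p.tiles ⊆ θ}

/-- Pixel access with 0-based natural-number coordinates. -/
def Pic.get {A : Type*} (p : Pic A) (i j : ℕ) : Option A :=
  if h : i < p.rows ∧ j < p.cols then some (p.val ⟨i, h.1⟩ ⟨j, h.2⟩) else none

/-- A grid grammar with grid parameter `k`: rules `A → t` (`t` a terminal) and
`A → [B_{1,1}, …, B_{k,k}]` (a `k×k` grid of nonterminals). -/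
structure GridGrammar (Sig N : Type*) (k : ℕ) where
  start : N
  termRules : Set (N × Sig)
  gridRules : Set (N × (Fin k → Fin k → N))

/-- `GridGen G A p`: the picture `p` is generated from nonterminal `A`.
A terminal rule `A → t` generates every `n×n` `t`-homogeneous square picture;
a grid rule generates the `k×k` assembly of pictures generated by the cells,
all of the same square size `n×n`. -/
inductive GridGen {Sig N : Type*} {k : ℕ} (G : GridGrammar Sig N k) :
    N → Pic Sig → Prop
  | term {A : N} {t : Sig} (p : Pic Sig) :
      (A, t) ∈ G.termRules → p.rows = p.cols → (∀ i j, p.val i j = t) →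
      GridGen G A p
  | grid {A : N} {B : Fin k → Fin k → N} (n : ℕ)
      (ps : Fin k → Fin k → Pic Sig) (q : Pic Sig) :
      (A, B) ∈ G.gridRules →
      (∀ i j, GridGen G (B i j) (ps i j)) →
      (∀ i j, (ps i j).rows = n ∧ (ps i j).cols = n) →
      q.rows = k * n → q.cols = k * n →
      (∀ (i j : Fin k) (a b : ℕ), a < n → b < n →
        q.get ((i : ℕ) * n + a) ((j : ℕ) * n + b) = (ps i j).get a b) →
      GridGen G A q

/-- The picture language generated by a grid grammar. -/
def GridLang {Sig N : Type*} {k : ℕ} (G : GridGrammar Sig N k) :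
    Set (Pic Sig) :=
  {p | GridGen G G.start p}

/-- `L` is a grid-grammar language. -/
def IsGridLang (Sig : Type) (L : Set (Pic Sig)) : Prop :=
  ∃ (N : Type) (k : ℕ), 2 ≤ k ∧ ∃ G : GridGrammar Sig N k, L = GridLang G

/-- A context-free string grammar over terminal alphabet `T`. -/
structure CFG (T NT : Type*) where
  start : NT
  rules : Set (NT × List (T ⊕ NT))

/-- One rewriting step of a context-free string grammar. -/
inductive CFG.Step {T NT : Type*} (G : CFG T NT) :
    List (T ⊕ NT) → List (T ⊕ NT) → Prop
  | mk {A : NT} {α : List (T ⊕ NT)} (l r : List (T ⊕ NT)) :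
      (A, α) ∈ G.rules → CFG.Step G (l ++ Sum.inr A :: r) (l ++ α ++ r)

/-- The string language of a context-free grammar. -/
def CFG.Lang {T NT : Type*} (G : CFG T NT) : Set (List T) :=
  {w | Relation.ReflTransGen (CFG.Step G) [Sum.inr G.start] (w.map Sum.inl)}

/-- A context-free matrix grammar: a horizontal CF grammar `H` over the
intermediate alphabet `{A_1, …, A_k}` and vertical CF grammars `V_1, …, V_k`
over `Σ` with start symbols `A_1, …, A_k`. -/
structure MatrixGrammar (Sig : Type) where
  k : ℕ
  Nh : Type
  H : CFG (Fin k) Nh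
  Nv : Fin k → Type
  V : (i : Fin k) → CFG Sig (Nv i)

/-- The picture language of a CF matrix grammar: `p ∈ L(G)` iff some
intermediate string `A_{x_1} … A_{x_n} ∈ L(H)` (`n` the number of columns of
`p`) is such that each column of `p`, read as a string, is in `L(V_{x_j})`. -/
def MGLang {Sig : Type} (G : MatrixGrammar Sig) : Set (Pic Sig) :=
  {p | ∃ xs : List (Fin G.k), xs ∈ G.H.Lang ∧ ∃ hlen : xs.length = p.cols,
    ∀ j : Fin p.cols,
      (List.ofFn fun i => p.val i j) ∈ (G.V (xs.get (Fin.cast hlen.symm j))).Lang}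

/-- `L` is a CF matrix language. -/
def IsMatrixLang (Sig : Type) (L : Set (Pic Sig)) : Prop :=
  ∃ G : MatrixGrammar Sig, MGLang G = L

section Aux

/-- A rectangular all-`()` picture. -/
def rectPic (m n : ℕ) (hm : 0 < m) (hn : 0 < n) : Pic Unit :=
  ⟨m, n, hm, hn, fun _ _ => ()⟩

lemma mem_MGLang_rect {G : MatrixGrammar Unit} {m n : ℕ} (hm : 0 < m) (hn : 0 < n)
    (xs : List (Fin G.k)) (hxs : xs ∈ G.H.Lang) (hlen : xs.length = n)
    (hcol : ∀ i ∈ xs, (List.ofFn fun _ : Fin m => ()) ∈ (G.V i).Lang) :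
    rectPic m n hm hn ∈ MGLang G := by
  refine ⟨xs, hxs, hlen, fun j => ?_⟩
  exact hcol _ (xs.get_mem _)

lemma MGLang_square_extract {G : MatrixGrammar Unit} {n : ℕ} (hn : 0 < n)
    (h : rectPic n n hn hn ∈ MGLang G) :
    ∃ xs : List (Fin G.k), xs ∈ G.H.Lang ∧ xs.length = n ∧
      ∀ i ∈ xs, (List.ofFn fun _ : Fin n => ()) ∈ (G.V i).Lang := by
  obtain ⟨xs, hxs, hlen, hcol⟩ := h
  refine ⟨xs, hxs, hlen, fun i hi => ?_⟩
  obtain ⟨j, rfl⟩ := List.mem_iff_get.mp hi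
  exact hcol (Fin.cast hlen j)

lemma not_matrix_squares :
    ¬ ∃ G : MatrixGrammar Unit,
        MGLang G = {p : Pic Unit | p.rows = p.cols} := by
  rintro ⟨G, hG⟩
  have key : ∀ n : ℕ, ∃ xs : List (Fin G.k), xs ∈ G.H.Lang ∧ xs.length = n + 1 ∧
      ∀ i ∈ xs, (List.ofFn fun _ : Fin (n + 1) => ()) ∈ (G.V i).Lang := by
    intro n
    refine MGLang_square_extract (Nat.succ_pos n) ?_
    rw [hG]; rfl
  choose xs h1 h2 h3 using key
  obtain ⟨a, b, hab, hf⟩ :=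
    Finite.exists_ne_map_eq_of_infinite (fun n => (xs n).toFinset)
  have hmem : rectPic (a + 1) (b + 1) (Nat.succ_pos a) (Nat.succ_pos b) ∈ MGLang G := by
    refine mem_MGLang_rect _ _ (xs b) (h1 b) (h2 b) (fun i hi => ?_)
    refine h3 a i ?_
    have : i ∈ (xs b).toFinset := List.mem_toFinset.mpr hi
    rw [← hf] at this
    exact List.mem_toFinset.mp this
  rw [hG] at hmem
  exact hab (by simpa [rectPic] using hmem)

lemma GridGen.rows_eq_cols {Sig N : Type*} {k : ℕ} {G : GridGrammar Sig N k}
    {A : N} {p : Pic Sig} (h : GridGen G A p) : p.rows = p.cols := by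
  cases h with
  | term p _ h2 _ => exact h2
  | grid n ps q _ _ _ hr hc _ => rw [hr, hc]

/-- grid grammar generating all squares over `Unit`. -/
def sqGrid : GridGrammar Unit Unit 2 := ⟨(), {((), ())}, ∅⟩

lemma sqGrid_lang : GridLang sqGrid = {p : Pic Unit | p.rows = p.cols} := by
  ext p
  constructor
  · exact fun h => h.rows_eq_cols
  · intro h
    exact GridGen.term p rfl h (fun _ _ => rfl)

/-- matrix grammar generating (among others) a 1×2 picture. -/
def mg2 : MatrixGrammar Unit where
  k := 1
  Nh := Unit
  H := ⟨(), {((), [Sum.inl 0, Sum.inl 0])}⟩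
  Nv := fun _ => Unit
  V := fun _ => ⟨(), {((), [Sum.inl ()])}⟩

def z0 : Fin mg2.k := ⟨0, Nat.one_pos⟩

lemma rect12_mem_mg2 :
    rectPic 1 2 Nat.one_pos (by norm_num) ∈ MGLang mg2 := by
  refine ⟨[z0, z0], ?_, rfl, fun j => ?_⟩
  · have step : CFG.Step mg2.H ([] ++ Sum.inr () :: [])
        ([] ++ [Sum.inl z0, Sum.inl z0] ++ []) :=
      CFG.Step.mk [] [] rfl
    simp only [List.nil_append, List.append_nil] at step
    exact Relation.ReflTransGen.single step
  · have step : CFG.Step (mg2.V z0) ([] ++ Sum.inr () :: [])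
        ([] ++ [Sum.inl ()] ++ []) :=
      CFG.Step.mk [] [] rfl
    simp only [List.nil_append, List.append_nil] at step
    show Relation.ReflTransGen _ _ _
    have : (List.ofFn fun i : Fin 1 => ()).map (Sum.inl (β := Unit)) = [Sum.inl ()] := rfl
    exact Relation.ReflTransGen.single step

end Aux

/-- No CF matrix grammar generates exactly the set of all
square pictures over a one-letter alphabet; consequently the classes of CF
matrix languages and grid-grammar languages are incomparable. -/
theorem squares_not_matrix_and_incomparable :
    (¬ ∃ G : MatrixGrammar Unit,
        MGLang G = {p : Pic Unit | p.rows = p.cols}) ∧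
    (∃ L : Set (Pic Unit), IsMatrixLang Unit L ∧ ¬ IsGridLang Unit L) ∧
    (∃ L : Set (Pic Unit), IsGridLang Unit L ∧ ¬ IsMatrixLang Unit L) := by
  refine ⟨not_matrix_squares, ⟨MGLang mg2, ⟨mg2, rfl⟩, ?_⟩, ⟨{p : Pic Unit | p.rows = p.cols}, ⟨Unit, 2, le_refl 2, sqGrid, sqGrid_lang.symm⟩, ?_⟩⟩
  · rintro ⟨N, k, hk, G', hEq⟩
    have h := rect12_mem_mg2
    rw [hEq] at h
    have := h.rows_eq_cols
    simp [rectPic] at this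
  · rintro ⟨G, hG⟩
    exact not_matrix_squares ⟨G, hG⟩
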